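/- (Quantum violation of the entropic Klyachko inequality.) For φ > 0, define unit vectors in ℝ³: v₁ = (0,0,1), v₂ = (sin φ, cos φ, 0), v₃ = N⁻¹(cos φ sin φ, −sin φ sin φ, sin φ cos φ) with N = √(sin²φ + cos²φ sin²φ), v₄ = (0, cos φ, sin φ), v₅ = (1,0,0), and the unit vector ψ = (sin 2φ, cos 2φ, sin 2φ)/√(1 + sin²2φ). Set p_i = ⟨v_i, ψ⟩² for i = 1,…,5, and for each i (indices mod 5) let Q_i be the distribution on outcome pairs with Q_i(1,0) = p_i, Q_i(0,1) = p_{i+1}, Q_i(0,0) = 1 − p_i − p_{i+1}, Q_i(1,1) = 0. Then there exists φ₀ > 0 such that for all φ ∈ (0, φ₀) these are valid probability distributions and the entropic Klyachko inequality is violated: H(Q₅) + h(p₂) + h(p₃) + h(p₄) − H(Q₁) − H(Q₂) − H(Q₃) − H(Q₄) > 0, where Q₅ is the joint distribution of (X₁, X₅), Q_i (i ≤ 4) that of (X_i, X_{i+1}), and h(p_i) is the entropy of the marginal of X_i. -/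

import Mathlib

/-- Joint Shannon entropy (in bits) of a bipartite outcome distribution,
with the convention `0 * logb 2 0 = 0` (automatic since `Real.logb 2 0 = 0`). -/
noncomputable def pairEntropy {β γ : Type*} [Fintype β] [Fintype γ] (q : β → γ → ℝ) : ℝ :=
  -∑ b, ∑ c, q b c * Real.logb 2 (q b c)

/-- The binary entropy `h(t) = −t log₂ t − (1−t) log₂ (1−t)`. -/
noncomputable def binEnt (t : ℝ) : ℝ :=
  -t * Real.logb 2 t - (1 - t) * Real.logb 2 (1 - t)

/-- Normalization factor `N = √(sin²φ + cos²φ sin²φ)`. -/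
noncomputable def Nrm (φ : ℝ) : ℝ :=
  Real.sqrt (Real.sin φ ^ 2 + Real.cos φ ^ 2 * Real.sin φ ^ 2)

/-- The five Klyachko vectors in `ℝ³` (0-indexed: `klyVec φ i` is `v_{i+1}`). -/
noncomputable def klyVec (φ : ℝ) : Fin 5 → ℝ × ℝ × ℝ :=
  ![((0 : ℝ), (0 : ℝ), (1 : ℝ)),
    (Real.sin φ, Real.cos φ, (0 : ℝ)),
    ((Nrm φ)⁻¹ * (Real.cos φ * Real.sin φ), (Nrm φ)⁻¹ * (-(Real.sin φ * Real.sin φ)),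
      (Nrm φ)⁻¹ * (Real.sin φ * Real.cos φ)),
    ((0 : ℝ), Real.cos φ, Real.sin φ),
    ((1 : ℝ), (0 : ℝ), (0 : ℝ))]

/-- The state `ψ = (sin 2φ, cos 2φ, sin 2φ)/√(1 + sin²2φ)`. -/
noncomputable def klyState (φ : ℝ) : ℝ × ℝ × ℝ :=
  ((Real.sqrt (1 + Real.sin (2 * φ) ^ 2))⁻¹ * Real.sin (2 * φ),
   (Real.sqrt (1 + Real.sin (2 * φ) ^ 2))⁻¹ * Real.cos (2 * φ),
   (Real.sqrt (1 + Real.sin (2 * φ) ^ 2))⁻¹ * Real.sin (2 * φ))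

/-- The Euclidean inner product on `ℝ³ = ℝ × ℝ × ℝ`. -/
noncomputable def ip3 (u w : ℝ × ℝ × ℝ) : ℝ :=
  u.1 * w.1 + u.2.1 * w.2.1 + u.2.2 * w.2.2

/-- `p_i = ⟨v_i, ψ⟩²` (0-indexed). -/
noncomputable def klyProb (φ : ℝ) (i : Fin 5) : ℝ :=
  ip3 (klyVec φ i) (klyState φ) ^ 2

/-- The quantum joint distribution of `(X_i, X_{i+1})` (indices mod 5, 0-indexed):
`Q_i(1,0) = p_i`, `Q_i(0,1) = p_{i+1}`, `Q_i(0,0) = 1 − p_i − p_{i+1}`, `Q_i(1,1) = 0`. -/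
noncomputable def klyQ (φ : ℝ) (i : Fin 5) : Fin 2 → Fin 2 → ℝ :=
  fun a b =>
    if a = 1 ∧ b = 0 then klyProb φ i
    else if a = 0 ∧ b = 1 then klyProb φ (i + 1)
    else if a = 0 ∧ b = 0 then 1 - klyProb φ i - klyProb φ (i + 1)
    else 0

/-! ### Auxiliary lemmas -/

section Aux
variable (φ : ℝ)

lemma sqrtD_sq : Real.sqrt (1 + Real.sin (2*φ)^2) ^ 2 = 1 + Real.sin (2*φ)^2 :=
  Real.sq_sqrt (by positivity)

lemma prob0 : klyProb φ 0 = Real.sin (2*φ)^2 / (1 + Real.sin (2*φ)^2) := by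
  have h := sqrtD_sq φ
  have hpos : (0:ℝ) < Real.sqrt (1 + Real.sin (2*φ)^2) := Real.sqrt_pos.2 (by positivity)
  simp only [klyProb, klyVec, klyState, ip3]
  norm_num [Matrix.cons_val_zero]
  field_simp
  rw [h]

lemma prob4 : klyProb φ 4 = Real.sin (2*φ)^2 / (1 + Real.sin (2*φ)^2) := by
  have h := sqrtD_sq φ
  have hpos : (0:ℝ) < Real.sqrt (1 + Real.sin (2*φ)^2) := Real.sqrt_pos.2 (by positivity)
  rw [klyProb, show klyVec φ 4 = ((1:ℝ), (0:ℝ), (0:ℝ)) from rfl]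
  simp only [klyProb, klyVec, klyState, ip3]
  norm_num [Matrix.cons_val_zero]
  field_simp
  rw [h]

lemma prob1 : klyProb φ 1 = Real.cos φ^2 / (1 + Real.sin (2*φ)^2) := by
  have h := sqrtD_sq φ
  have hpos : (0:ℝ) < Real.sqrt (1 + Real.sin (2*φ)^2) := Real.sqrt_pos.2 (by positivity)
  have hsc : Real.sin φ ^2 + Real.cos φ ^2 = 1 := Real.sin_sq_add_cos_sq φ
  simp only [klyProb, klyVec, klyState, ip3]
  norm_num [Matrix.cons_val_one]
  rw [Real.sin_two_mul, Real.cos_two_mul]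
  field_simp
  rw [Real.sq_sqrt (by positivity)]
  linear_combination (4*Real.cos φ^2*(Real.sin φ^2+Real.cos φ^2) + 16*Real.cos φ^4*Real.sin φ^2*(Real.sin φ^2+Real.cos φ^2)) * hsc

lemma prob3 : klyProb φ 3 = Real.cos φ^2 / (1 + Real.sin (2*φ)^2) := by
  have h := sqrtD_sq φ
  have hpos : (0:ℝ) < Real.sqrt (1 + Real.sin (2*φ)^2) := Real.sqrt_pos.2 (by positivity)
  have hsc : Real.sin φ ^2 + Real.cos φ ^2 = 1 := Real.sin_sq_add_cos_sq φ
  rw [klyProb, show klyVec φ 3 = ((0:ℝ), Real.cos φ, Real.sin φ) from rfl]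
  simp only [klyProb, klyVec, klyState, ip3]
  norm_num [Matrix.cons_val_one]
  rw [Real.sin_two_mul, Real.cos_two_mul]
  field_simp
  rw [Real.sq_sqrt (by positivity)]
  linear_combination (4*Real.cos φ^2*(Real.sin φ^2+Real.cos φ^2) + 16*Real.cos φ^4*Real.sin φ^2*(Real.sin φ^2+Real.cos φ^2)) * hsc

lemma prob2 (hs : Real.sin φ ≠ 0) :
    klyProb φ 2 = Real.sin φ^2 * (2*Real.cos φ^2+1)^2 /
      ((1+Real.cos φ^2) * (1 + Real.sin (2*φ)^2)) := by
  have h := sqrtD_sq φ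
  have hpos : (0:ℝ) < Real.sqrt (1 + Real.sin (2*φ)^2) := Real.sqrt_pos.2 (by positivity)
  have hsc : Real.sin φ ^2 + Real.cos φ ^2 = 1 := Real.sin_sq_add_cos_sq φ
  have hN2 : Nrm φ ^ 2 = Real.sin φ^2 * (1 + Real.cos φ^2) := by
    rw [Nrm, Real.sq_sqrt (by positivity)]; ring
  have hNpos : (0:ℝ) < Nrm φ := by
    rw [Nrm]; apply Real.sqrt_pos.2; positivity
  rw [klyProb, show klyVec φ 2 = ((Nrm φ)⁻¹ * (Real.cos φ * Real.sin φ), (Nrm φ)⁻¹ * (-(Real.sin φ * Real.sin φ)),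
      (Nrm φ)⁻¹ * (Real.sin φ * Real.cos φ)) from rfl]
  simp only [klyProb, klyVec, klyState, ip3]
  norm_num [Matrix.cons_val_zero, Matrix.cons_val_one]
  rw [Real.sin_two_mul, Real.cos_two_mul]
  field_simp
  rw [hN2, Real.sq_sqrt (by positivity)]
  ring

end Aux

noncomputable def fEnt (x : ℝ) : ℝ := -(x * Real.logb 2 x)

lemma fEnt_eq (x : ℝ) : fEnt x = x * Real.logb 2 x⁻¹ := by
  rw [fEnt, Real.logb_inv]; ring

lemma fEnt_nonneg {x : ℝ} (h0 : 0 ≤ x) (h1 : x ≤ 1) : 0 ≤ fEnt x := by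
  rcases eq_or_lt_of_le h0 with h | h
  · simp [fEnt, ← h]
  · rw [fEnt_eq]
    have : (0:ℝ) ≤ Real.logb 2 x⁻¹ :=
      Real.logb_nonneg one_lt_two (by rw [le_inv_comm₀ one_pos h]; simpa using h1)
    positivity

lemma fEnt_le {d x C : ℝ} (hd : 0 < d) (hdx : d ≤ x) (hxC : x ≤ C) (hx1 : x ≤ 1) :
    fEnt x ≤ C * Real.logb 2 d⁻¹ := by
  rw [fEnt_eq]
  have hx0 : 0 < x := lt_of_lt_of_le hd hdx
  have h1 : Real.logb 2 x⁻¹ ≤ Real.logb 2 d⁻¹ :=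
    Real.logb_le_logb_of_le one_lt_two (by positivity) (inv_anti₀ hd hdx)
  have h2 : (0:ℝ) ≤ Real.logb 2 x⁻¹ :=
    Real.logb_nonneg one_lt_two (by rw [le_inv_comm₀ one_pos hx0]; simpa using hx1)
  exact mul_le_mul hxC h1 h2 (by linarith)

lemma fEnt_ge {d x C : ℝ} (hd : 0 < d) (hdx : d ≤ x) (hxC : x ≤ C) (hC0 : 0 < C)
    (hC1 : C ≤ 1) : d * Real.logb 2 C⁻¹ ≤ fEnt x := by
  rw [fEnt_eq]
  have hx0 : 0 < x := hd.trans_le hdx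
  have h1 : Real.logb 2 C⁻¹ ≤ Real.logb 2 x⁻¹ :=
    Real.logb_le_logb_of_le one_lt_two (by positivity) (inv_anti₀ hx0 hxC)
  have h2 : (0:ℝ) ≤ Real.logb 2 C⁻¹ :=
    Real.logb_nonneg one_lt_two (by rw [le_inv_comm₀ one_pos hC0]; simpa using hC1)
  exact mul_le_mul hdx h1 h2 (le_trans hd.le hdx)

lemma fEnt_one_sub_le {y : ℝ} (h0 : 0 ≤ y) (h1 : y ≤ 1/2) : fEnt (1 - y) ≤ 3 * y := by
  have hy : (0:ℝ) < 1 - y := by linarith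
  have hlog : Real.log ((1-y)⁻¹) ≤ 2 * y := by
    have := Real.log_le_sub_one_of_pos (x := (1-y)⁻¹) (by positivity)
    have h2 : (1-y)⁻¹ - 1 = y / (1-y) := by field_simp; ring
    have h3 : y / (1-y) ≤ 2*y := by
      rw [div_le_iff₀ hy]; nlinarith
    linarith
  have hln2 : (0.6931471803:ℝ) < Real.log 2 := Real.log_two_gt_d9
  have hlbn : 0 ≤ Real.logb 2 ((1-y)⁻¹) :=
    Real.logb_nonneg one_lt_two (by rw [le_inv_comm₀ one_pos hy]; linarith)
  have step1 : fEnt (1-y) ≤ Real.logb 2 ((1-y)⁻¹) := by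
    rw [fEnt_eq]
    nlinarith [hlbn]
  have step2 : Real.logb 2 ((1-y)⁻¹) ≤ 3 * y := by
    rw [Real.logb, div_le_iff₀ (by linarith : (0:ℝ) < Real.log 2)]
    nlinarith [hlog, hln2]
  linarith

lemma logb_two_pow (n : ℕ) : Real.logb 2 ((2:ℝ)^n) = n := by
  rw [Real.logb, Real.log_pow]
  field_simp

set_option maxHeartbeats 2000000 in
/-- Quantum violation of the entropic Klyachko inequality: there is `φ₀ > 0` such that
for all `φ ∈ (0, φ₀)` the distributions `Q_i` are valid probability distributions and
`H(Q₅) + h(p₂) + h(p₃) + h(p₄) − H(Q₁) − H(Q₂) − H(Q₃) − H(Q₄) > 0`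
(in the paper's 1-based notation; here everything is 0-indexed). -/
theorem klyachko_quantum_violation :
    ∃ φ₀ > (0 : ℝ), ∀ φ : ℝ, 0 < φ → φ < φ₀ →
      ((∀ (i : Fin 5) (a b : Fin 2), 0 ≤ klyQ φ i a b) ∧
        (∀ i : Fin 5, ∑ a, ∑ b, klyQ φ i a b = 1)) ∧
      0 < pairEntropy (klyQ φ 4) + binEnt (klyProb φ 1) + binEnt (klyProb φ 2) +
            binEnt (klyProb φ 3) -
          pairEntropy (klyQ φ 0) - pairEntropy (klyQ φ 1) - pairEntropy (klyQ φ 2) -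
          pairEntropy (klyQ φ 3) := by
  refine ⟨1/100000, by norm_num, fun φ hφ0 hφ => ?_⟩
  have hπ : φ < Real.pi := by
    have := Real.pi_gt_three; linarith
  have hs0 : 0 < Real.sin φ := Real.sin_pos_of_pos_of_lt_pi hφ0 hπ
  have hsφ : Real.sin φ < φ := Real.sin_lt hφ0
  obtain ⟨t, ht_def⟩ : ∃ x:ℝ, x = Real.sin φ ^ 2 := ⟨_, rfl⟩
  have ht0 : 0 < t := by rw [ht_def]; positivity
  have ht : t ≤ 1/10000000000 := by
    have h1 : Real.sin φ ≤ 1/100000 := by linarith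
    nlinarith [hs0, h1, ht_def]
  have hsc : Real.sin φ^2 + Real.cos φ^2 = 1 := Real.sin_sq_add_cos_sq φ
  have hc2 : Real.cos φ ^2 = 1 - t := by rw [ht_def]; linarith
  have hS2 : Real.sin (2*φ)^2 = 4*t*(1-t) := by
    rw [Real.sin_two_mul]
    linear_combination (-4*Real.cos φ^2) * ht_def + (4*t) * hc2
  have hD0 : (0:ℝ) < 1+4*t*(1-t) := by nlinarith
  have hD1 : (1:ℝ) ≤ 1+4*t*(1-t) := by nlinarith
  have hD2 : 1+4*t*(1-t) ≤ 2 := by nlinarith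
  have h2t0 : (0:ℝ) < 2 - t := by nlinarith
  have hD0' : 1 + t * (1 - t) * 4 ≠ 0 := by nlinarith
  have hD0'' : 1 + t * 4 * (1 - t) ≠ 0 := by nlinarith
  -- closed forms
  have hp0 : klyProb φ 0 = 4*t*(1-t)/(1+4*t*(1-t)) := by rw [prob0, hS2]
  have hp4 : klyProb φ 4 = 4*t*(1-t)/(1+4*t*(1-t)) := by rw [prob4, hS2]
  have hp1 : klyProb φ 1 = (1-t)/(1+4*t*(1-t)) := by rw [prob1, hS2, hc2]
  have hp3 : klyProb φ 3 = (1-t)/(1+4*t*(1-t)) := by rw [prob3, hS2, hc2]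
  have hp2 : klyProb φ 2 = t*(3-2*t)^2/((2-t)*(1+4*t*(1-t))) := by
    rw [prob2 φ hs0.ne', hS2, hc2, ← ht_def,
      div_eq_div_iff (by nlinarith) (by positivity)]
    ring
  -- leftover complements
  have hR0 : 1 - klyProb φ 0 - klyProb φ 1 = t/(1+4*t*(1-t)) := by
    rw [hp0, hp1]
    field_simp
    ring
  have hR1 : 1 - klyProb φ 1 - klyProb φ 2 = t*(1-t)/((2-t)*(1+4*t*(1-t))) := by
    rw [hp1, hp2]
    field_simp
    ring
  have hR2 : 1 - klyProb φ 2 - klyProb φ 3 = t*(1-t)/((2-t)*(1+4*t*(1-t))) := by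
    rw [hp3, hp2]
    field_simp
    ring
  have hR3 : 1 - klyProb φ 3 - klyProb φ 4 = t/(1+4*t*(1-t)) := by
    rw [hp3, hp4]
    field_simp
    ring
  have hR4 : 1 - klyProb φ 4 - klyProb φ 0 = (1-2*t)^2/(1+4*t*(1-t)) := by
    rw [hp0, hp4]
    field_simp
    ring
  -- numeric bounds
  have ha_eq : 1 - klyProb φ 1 = t*(5-4*t)/(1+4*t*(1-t)) := by
    rw [hp1]; field_simp; ring
  have ha_eq3 : 1 - klyProb φ 3 = t*(5-4*t)/(1+4*t*(1-t)) := by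
    rw [hp3]; field_simp; ring
  have ha_lo : 49/10*t ≤ 1 - klyProb φ 1 := by
    rw [ha_eq, le_div_iff₀ hD0]; nlinarith [mul_le_mul_of_nonneg_left ht ht0.le, mul_pos ht0 ht0, ht0.le, ht]
  have ha_hi : 1 - klyProb φ 1 ≤ 5*t := by
    rw [ha_eq, div_le_iff₀ hD0]; nlinarith [mul_le_mul_of_nonneg_left ht ht0.le, mul_pos ht0 ht0, ht0.le, ht]
  have ha_lo3 : 49/10*t ≤ 1 - klyProb φ 3 := by
    rw [ha_eq3, le_div_iff₀ hD0]; nlinarith [mul_le_mul_of_nonneg_left ht ht0.le, mul_pos ht0 ht0, ht0.le, ht]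
  have ha_hi3 : 1 - klyProb φ 3 ≤ 5*t := by
    rw [ha_eq3, div_le_iff₀ hD0]; nlinarith [mul_le_mul_of_nonneg_left ht ht0.le, mul_pos ht0 ht0, ht0.le, ht]
  have hp2_lo : t ≤ klyProb φ 2 := by
    rw [hp2, le_div_iff₀ (by positivity)]; nlinarith [mul_le_mul_of_nonneg_left ht ht0.le, mul_pos ht0 ht0, ht0.le, ht]
  have hp2_hi : klyProb φ 2 ≤ 46/10*t := by
    rw [hp2, div_le_iff₀ (by positivity)]; nlinarith [mul_le_mul_of_nonneg_left ht ht0.le, mul_pos ht0 ht0, ht0.le, ht]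
  have hR0_lo : t/2 ≤ t/(1+4*t*(1-t)) := by
    rw [div_le_div_iff₀ (by norm_num) hD0]; nlinarith [mul_le_mul_of_nonneg_left ht ht0.le, mul_pos ht0 ht0, ht0.le, ht]
  have hR0_hi : t/(1+4*t*(1-t)) ≤ t := by
    rw [div_le_iff₀ hD0]; nlinarith [mul_le_mul_of_nonneg_left ht ht0.le, mul_pos ht0 ht0, ht0.le, ht]
  have hR1_lo : t/4 ≤ t*(1-t)/((2-t)*(1+4*t*(1-t))) := by
    rw [div_le_div_iff₀ (by norm_num) (by positivity)]; nlinarith [mul_le_mul_of_nonneg_left ht ht0.le, mul_pos ht0 ht0, ht0.le, ht]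
  have hR1_hi : t*(1-t)/((2-t)*(1+4*t*(1-t))) ≤ t/2 := by
    rw [div_le_div_iff₀ (by positivity) (by norm_num)]; nlinarith [mul_le_mul_of_nonneg_left ht ht0.le, mul_pos ht0 ht0, ht0.le, ht]
  have hpnn : ∀ j : Fin 5, 0 ≤ klyProb φ j := fun j => by
    rw [klyProb]; positivity
  have hRnn : ∀ j : Fin 5, 0 ≤ 1 - klyProb φ j - klyProb φ (j+1) := by
    intro j
    fin_cases j
    · show 0 ≤ 1 - klyProb φ 0 - klyProb φ 1
      rw [hR0]; positivity
    · show 0 ≤ 1 - klyProb φ 1 - klyProb φ 2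
      rw [hR1]; exact div_nonneg (by nlinarith) (by nlinarith)
    · show 0 ≤ 1 - klyProb φ 2 - klyProb φ 3
      rw [hR2]; exact div_nonneg (by nlinarith) (by nlinarith)
    · show 0 ≤ 1 - klyProb φ 3 - klyProb φ 4
      rw [hR3]; positivity
    · show 0 ≤ 1 - klyProb φ 4 - klyProb φ 0
      rw [hR4]; positivity
  have hq14 : (1-2*t)^2 ≤ 1+4*t*(1-t) := by nlinarith
  refine ⟨⟨fun i a b => ?_, fun i => ?_⟩, ?_⟩
  · rw [klyQ]
    split_ifs
    · exact hpnn i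
    · exact hpnn (i+1)
    · exact hRnn i
    · exact le_refl 0
  · simp [klyQ, Fin.sum_univ_two]
  · -- the entropic violation
    have hbin : ∀ x:ℝ, binEnt x = fEnt x + fEnt (1-x) := fun x => by
      rw [binEnt, fEnt, fEnt]; ring
    have hq : ∀ i : Fin 5, pairEntropy (klyQ φ i) =
        fEnt (klyProb φ i) + fEnt (klyProb φ (i+1)) +
          fEnt (1 - klyProb φ i - klyProb φ (i+1)) := by
      intro i
      simp [pairEntropy, klyQ, Fin.sum_univ_two, fEnt]
      ring
    rw [hq 0, hq 1, hq 2, hq 3, hq 4, hbin, hbin, hbin,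
        show ((0:Fin 5)+1) = 1 from rfl, show ((1:Fin 5)+1) = 2 from rfl,
        show ((2:Fin 5)+1) = 3 from rfl, show ((3:Fin 5)+1) = 4 from rfl,
        show ((4:Fin 5)+1) = 0 from rfl, hR0, hR1, hR2, hR3, hR4]
    have htne : t ≠ 0 := ht0.ne'
    have h8 : Real.logb 2 (8:ℝ) = 3 := by
      rw [show (8:ℝ) = 2^(3:ℕ) by norm_num, logb_two_pow]; norm_num
    have h2' : Real.logb 2 (2:ℝ) = 1 := by
      rw [Real.logb, div_self (Real.log_pos one_lt_two).ne']
    have h4 : Real.logb 2 (4:ℝ) = 2 := by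
      rw [show (4:ℝ) = 2^(2:ℕ) by norm_num, logb_two_pow]; norm_num
    have hlog8 : Real.logb 2 ((8*t)⁻¹) = Real.logb 2 t⁻¹ - 3 := by
      rw [Real.logb_inv, Real.logb_mul (by norm_num) htne, h8, Real.logb_inv]; ring
    have hlog2 : Real.logb 2 ((t/2)⁻¹) = Real.logb 2 t⁻¹ + 1 := by
      rw [Real.logb_inv, Real.logb_div htne (by norm_num), h2', Real.logb_inv]; ring
    have hlog4 : Real.logb 2 ((t/4)⁻¹) = Real.logb 2 t⁻¹ + 2 := by
      rw [Real.logb_inv, Real.logb_div htne (by norm_num), h4, Real.logb_inv]; ring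
    have hL33 : (33:ℝ) ≤ Real.logb 2 t⁻¹ := by
      have h1 : (2:ℝ)^(33:ℕ) ≤ t⁻¹ := by
        have h2 : t ≤ ((2:ℝ)^(33:ℕ))⁻¹ := le_trans ht (by norm_num)
        calc (2:ℝ)^(33:ℕ) = (((2:ℝ)^(33:ℕ))⁻¹)⁻¹ := by rw [inv_inv]
          _ ≤ t⁻¹ := inv_anti₀ ht0 h2
      calc (33:ℝ) = Real.logb 2 ((2:ℝ)^(33:ℕ)) := by rw [logb_two_pow]; norm_num
        _ ≤ _ := Real.logb_le_logb_of_le one_lt_two (by positivity) h1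
    have hA1 : 49/10*t * (Real.logb 2 t⁻¹ - 3) ≤ fEnt (1 - klyProb φ 1) := by
      have h := fEnt_ge (d := 49/10*t) (x := 1 - klyProb φ 1) (C := 8*t)
        (by positivity) ha_lo (by linarith) (by positivity) (by linarith)
      rwa [hlog8] at h
    have hA13 : 49/10*t * (Real.logb 2 t⁻¹ - 3) ≤ fEnt (1 - klyProb φ 3) := by
      have h := fEnt_ge (d := 49/10*t) (x := 1 - klyProb φ 3) (C := 8*t)
        (by positivity) ha_lo3 (by linarith) (by positivity) (by linarith)
      rwa [hlog8] at h
    have hA2 : fEnt (klyProb φ 2) ≤ 46/10*t * Real.logb 2 t⁻¹ :=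
      fEnt_le ht0 hp2_lo hp2_hi (by linarith)
    have hA3 : fEnt (t/(1+4*t*(1-t))) ≤ t * (Real.logb 2 t⁻¹ + 1) := by
      have h := fEnt_le (d := t/2) (C := t) (by positivity) hR0_lo hR0_hi
        (by linarith [hR0_hi])
      rwa [hlog2] at h
    have hA4 : fEnt (t*(1-t)/((2-t)*(1+4*t*(1-t)))) ≤ t/2 * (Real.logb 2 t⁻¹ + 2) := by
      have h := fEnt_le (d := t/4) (C := t/2) (by positivity) hR1_lo hR1_hi
        (by linarith [hR1_hi])
      rwa [hlog4] at h
    have hA5 : fEnt (klyProb φ 1) ≤ 15*t := by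
      have h := fEnt_one_sub_le (y := 1 - klyProb φ 1) (by linarith) (by linarith)
      have he : (1 : ℝ) - (1 - klyProb φ 1) = klyProb φ 1 := by ring
      rw [he] at h
      linarith [ha_hi]
    have hA53 : fEnt (klyProb φ 3) ≤ 15*t := by
      have h := fEnt_one_sub_le (y := 1 - klyProb φ 3) (by linarith) (by linarith)
      have he : (1 : ℝ) - (1 - klyProb φ 3) = klyProb φ 3 := by ring
      rw [he] at h
      linarith [ha_hi3]
    have hA6 : 0 ≤ fEnt ((1-2*t)^2/(1+4*t*(1-t))) :=
      fEnt_nonneg (div_nonneg (sq_nonneg _) hD0.le) (by rw [div_le_one hD0]; exact hq14)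
    have hA7 : 0 ≤ fEnt (1 - klyProb φ 2) :=
      fEnt_nonneg (by linarith) (by linarith [hpnn 2])
    have hprod : t * 33 ≤ t * Real.logb 2 t⁻¹ :=
      mul_le_mul_of_nonneg_left hL33 ht0.le
    linarith [hA1, hA13, hA2, hA3, hA4, hA5, hA53, hA6, hA7, hprod, ht0]
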